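/- Let I_p be the path on p ≥ 2 nodes and C_p the cycle on p ≥ 4 nodes. Then the image of CIM_{I_p} under the coordinate projection sending the coordinate indexed by {i−1, i, i+1} to the (i−1)-st coordinate of ℝ^{p−2} (for i = 2, …, p−1) equals STAB(I_{p−2}), and this projection is an affine bijection between CIM_{I_p} and STAB(I_{p−2}). Likewise, the image of CIM_{C_p} under the projection sending the coordinate indexed by {i−1, i, i+1} (indices mod p) to the (i−1)-st coordinate of ℝ^p is the convex hull of the incidence vectors χ_S of the non-empty stable sets S of C_p, and this projection is an affine bijection onto its image. -/

import Mathlib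

open Classical

/-- A DAG on vertex type `V`: a directed graph (adjacency relation) with no directed cycles. -/
structure DAG (V : Type) where
  adj : V → V → Prop
  acyclic : ∀ v, ¬ Relation.TransGen adj v v

namespace DAG

variable {V : Type}

/-- The skeleton of a DAG: the undirected graph obtained by forgetting directions. -/
def skeleton (D : DAG V) : SimpleGraph V where
  Adj i j := D.adj i j ∨ D.adj j i
  symm := by constructor; intro i j h; exact h.symm
  loopless := by
    constructor
    intro i h
    rcases h with h | h <;> exact D.acyclic i (Relation.TransGen.single h)

/-- The characteristic imset of a DAG, as a vector indexed by finite vertex sets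
(coordinates on sets of size `< 2` are identically zero). -/
noncomputable def imset (D : DAG V) (S : Finset V) : ℝ :=
  if 2 ≤ S.card ∧ ∃ i ∈ S, ∀ j ∈ S, j ≠ i → D.adj j i then 1 else 0

/-- `D.IsVStructure i j k` means `i → j ← k` is an induced subgraph of `D`
(`i` and `k` non-adjacent). -/
def IsVStructure (D : DAG V) (i j k : V) : Prop :=
  i ≠ k ∧ D.adj i j ∧ D.adj k j ∧ ¬ D.adj i k ∧ ¬ D.adj k i

end DAG

/-- Two DAGs are Markov equivalent iff they have the same skeleton and the same
v-structures. -/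
def MarkovEquiv {V : Type} (D E : DAG V) : Prop :=
  D.skeleton = E.skeleton ∧ ∀ i j k, D.IsVStructure i j k ↔ E.IsVStructure i j k

/-- An arrow `i → j` of `D` is essential if it occurs in every DAG Markov equivalent to `D`. -/
def DAG.Essential {V : Type} (D : DAG V) (i j : V) : Prop :=
  D.adj i j ∧ ∀ E : DAG V, MarkovEquiv D E → E.adj i j

/-- The characteristic imset polytope of an undirected graph `G`: the convex hull of the
characteristic imsets of all DAGs with skeleton `G`. -/
noncomputable def CIM {V : Type} (G : SimpleGraph V) : Set (Finset V → ℝ) :=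
  convexHull ℝ { f | ∃ D : DAG V, D.skeleton = G ∧ f = D.imset }

/-- `conv(u,v)` is an edge (one-dimensional face) of `P`: there is a linear functional whose
maximum over `P` is attained exactly on the segment from `u` to `v`. -/
def IsPolytopeEdge {E : Type*} [AddCommGroup E] [Module ℝ E] (P : Set E) (u v : E) : Prop :=
  u ≠ v ∧ ∃ φ : E →ₗ[ℝ] ℝ, (∀ x ∈ P, φ x ≤ φ u) ∧ ∀ x ∈ P, (φ x = φ u ↔ x ∈ segment ℝ u v)

/-- `P` is a simplex of dimension `d`: the convex hull of `d+1` affinely independent points. -/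
def IsSimplexOfDim {E : Type*} [AddCommGroup E] [Module ℝ E] (P : Set E) (d : ℕ) : Prop :=
  ∃ pts : Fin (d + 1) → E, AffineIndependent ℝ pts ∧ P = convexHull ℝ (Set.range pts)

/-- The standard basis vector indexed by `S`. -/
noncomputable def eVec {V : Type} (S : Finset V) : Finset V → ℝ :=
  fun T => if T = S then 1 else 0

/-- The path graph `I_m` on `Fin m`, with edges `{i, i+1}`. -/
def pathG (m : ℕ) : SimpleGraph (Fin m) :=
  SimpleGraph.fromRel (fun i j => (i : ℕ) + 1 = (j : ℕ))

/-- The cycle graph `C_m` on `Fin m`, with edges `{i, i+1}` taken modulo `m`. -/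
def cycleG (m : ℕ) : SimpleGraph (Fin m) :=
  SimpleGraph.fromRel (fun i j => ((i : ℕ) + 1) % m = (j : ℕ))

/-- The incidence vector of a finite set `S`. -/
noncomputable def indVec {W : Type} (S : Finset W) : W → ℝ :=
  fun v => if v ∈ S then 1 else 0

/-- `S` is a stable (independent) set of `G`. -/
def IsStable {W : Type} (G : SimpleGraph W) (S : Finset W) : Prop :=
  ∀ a ∈ S, ∀ b ∈ S, ¬ G.Adj a b

/-- The stable set polytope of `G`: the convex hull of the incidence vectors of the stable
sets of `G`. -/
noncomputable def STAB {W : Type} (G : SimpleGraph W) : Set (W → ℝ) :=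
  convexHull ℝ { f | ∃ S : Finset W, IsStable G S ∧ f = indVec S }

/-- The triple `{t, t+1, t+2}` of consecutive vertices of the path `I_{n+2}`. -/
def pathTriple (n : ℕ) (t : Fin n) : Finset (Fin (n + 2)) :=
  {⟨t.val, by omega⟩, ⟨t.val + 1, by omega⟩, ⟨t.val + 2, by omega⟩}

/-- The coordinate projection for the path `I_{n+2}`, sending the coordinate indexed by the
triple of consecutive vertices `{t, t+1, t+2}` to the `t`-th coordinate of `ℝ^n`. -/
noncomputable def pathProj (n : ℕ) : (Finset (Fin (n + 2)) → ℝ) →ₗ[ℝ] (Fin n → ℝ) where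
  toFun f t := f (pathTriple n t)
  map_add' := by intro f g; rfl
  map_smul' := by intro c f; rfl

/-- The coordinate projection for the cycle `C_{n+4}`, sending the coordinate indexed by the
triple of consecutive vertices `{t, t+1, t+2}` (mod `n+4`) to the `t`-th coordinate. -/
noncomputable def cycleProj (n : ℕ) : (Finset (Fin (n + 4)) → ℝ) →ₗ[ℝ] (Fin (n + 4) → ℝ) where
  toFun f t := f {t, t + 1, t + 2}
  map_add' := by intro f g; rfl
  map_smul' := by intro c f; rfl

section Helpers

open Fin.CommRing

/-- A digraph admitting a strictly monotone rank function is acyclic. -/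
lemma acyclic_of_rank {V : Type} (adj : V → V → Prop) (f : V → ℕ)
    (h : ∀ i j, adj i j → f i < f j) : ∀ v, ¬ Relation.TransGen adj v v := by
  have key : ∀ a b, Relation.TransGen adj a b → f a < f b := by
    intro a b hab
    induction hab with
    | single h' => exact h _ _ h'
    | tail _ h' ih => exact ih.trans (h _ _ h')
  exact fun v hv => lt_irrefl _ (key v v hv)

lemma not_adj_both {V : Type} (D : DAG V) (i j : V) : ¬ (D.adj i j ∧ D.adj j i) := by
  rintro ⟨h1, h2⟩
  exact D.acyclic i ((Relation.TransGen.single h1).tail h2)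

lemma skeleton_adj_iff {V : Type} (D : DAG V) (i j : V) :
    D.skeleton.Adj i j ↔ (D.adj i j ∨ D.adj j i) := Iff.rfl

lemma no_step {q : ℕ} [NeZero q] (adj : Fin q → Fin q → Prop)
    (hac : ∀ v, ¬ Relation.TransGen adj v v) (d : Fin q) (h : ∀ v, adj v (v + d)) : False := by
  have key : ∀ m : ℕ, Relation.TransGen adj 0 ((m + 1) • d) := by
    intro m
    induction m with
    | zero => simpa using Relation.TransGen.single (h 0)
    | succ k ih =>
        have h2 := Relation.TransGen.tail ih (h ((k + 1) • d))
        rwa [← succ_nsmul] at h2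
  have h3 := key (q - 1)
  have hq : q - 1 + 1 = q := Nat.succ_pred_eq_of_pos (Nat.pos_of_ne_zero (NeZero.ne q))
  rw [hq, nsmul_eq_mul, Fin.natCast_self, zero_mul] at h3
  exact hac 0 h3

lemma step_all {q : ℕ} [NeZero q] (P : Fin q → Prop) (h : ∀ v, P v → P (v + 1))
    (v w : Fin q) (hv : P v) : P w := by
  have key : ∀ k : ℕ, P (v + (k : Fin q)) := by
    intro k
    induction k with
    | zero => simpa using hv
    | succ m ih =>
        have h2 := h _ ih
        rwa [add_assoc, ← Nat.cast_succ] at h2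
  have h3 := key ((w - v).val)
  rwa [Fin.cast_val_eq_self, show v + (w - v) = w by ring] at h3

lemma val_add_one_of_ne {q : ℕ} (x : Fin (q + 1)) (h : x + 1 ≠ 0) :
    ((x + 1 : Fin (q + 1)) : ℕ) = (x : ℕ) + 1 := by
  rcases eq_or_ne x (Fin.last q) with rfl | hx
  · exact absurd (by simp) h
  · exact Fin.val_add_one_of_lt (lt_of_le_of_ne (Fin.le_last x) hx)

lemma ite_eq_ite_of_iff {P Q : Prop} {h1 : Decidable P} {h2 : Decidable Q} (h : P ↔ Q) :
    (@ite ℝ P h1 1 0) = @ite ℝ Q h2 1 0 := by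
  by_cases hp : P
  · rw [if_pos hp, if_pos (h.1 hp)]
  · rw [if_neg hp, if_neg (fun hq => hp (h.2 hq))]

end Helpers
section PathLemmas

lemma pathG_adj {m : ℕ} (i j : Fin m) :
    (pathG m).Adj i j ↔ ((i : ℕ) + 1 = (j : ℕ) ∨ (j : ℕ) + 1 = (i : ℕ)) := by
  constructor
  · rintro ⟨-, h | h⟩
    · exact Or.inl h
    · exact Or.inr h
  · intro h
    refine ⟨fun hij => ?_, by tauto⟩
    subst hij
    omega

lemma pathProj_apply {n : ℕ} (f : Finset (Fin (n + 2)) → ℝ) (t : Fin n) :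
    pathProj n f t = f (pathTriple n t) := rfl

lemma mem_pathTriple {n : ℕ} (t : Fin n) (x : Fin (n + 2)) :
    x ∈ pathTriple n t ↔ ((x : ℕ) = t ∨ (x : ℕ) = t + 1 ∨ (x : ℕ) = t + 2) := by
  simp [pathTriple, Fin.ext_iff]

lemma card_pathTriple {n : ℕ} (t : Fin n) : (pathTriple n t).card = 3 := by
  rw [pathTriple, Finset.card_insert_of_notMem, Finset.card_insert_of_notMem,
    Finset.card_singleton]
  · simp [Fin.ext_iff]
  · simp [Fin.ext_iff]

variable {n : ℕ} {D : DAG (Fin (n + 2))}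

lemma path_adj_cases (hD : D.skeleton = pathG (n + 2)) (i j : Fin (n + 2)) (h : D.adj i j) :
    (i : ℕ) + 1 = (j : ℕ) ∨ (j : ℕ) + 1 = (i : ℕ) := by
  have h2 : D.skeleton.Adj i j := Or.inl h
  rw [hD] at h2
  exact (pathG_adj i j).1 h2

lemma path_adj_total (hD : D.skeleton = pathG (n + 2)) (i j : Fin (n + 2)) (h : (i : ℕ) + 1 = (j : ℕ)) :
    D.adj i j ∨ D.adj j i := by
  have h2 : (pathG (n + 2)).Adj i j := (pathG_adj i j).2 (Or.inl h)
  rw [← hD] at h2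
  exact h2

lemma path_imset_pair (hD : D.skeleton = pathG (n + 2)) (i j : Fin (n + 2)) (hij : (i : ℕ) + 1 = (j : ℕ)) :
    D.imset {i, j} = 1 := by
  have hne : i ≠ j := by simp [Fin.ext_iff]; omega
  rw [DAG.imset, if_pos]
  constructor
  · rw [Finset.card_insert_of_notMem (by simpa using hne), Finset.card_singleton]
  · rcases path_adj_total hD i j hij with h | h
    · exact ⟨j, by simp, fun k hk hkj => by
        rcases Finset.mem_insert.1 hk with rfl | hk
        · exact h
        · exact absurd (Finset.mem_singleton.1 hk) hkj⟩
    · exact ⟨i, by simp, fun k hk hki => by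
        rcases Finset.mem_insert.1 hk with rfl | hk
        · exact absurd rfl hki
        · rw [Finset.mem_singleton.1 hk]; exact h⟩

lemma path_imset_triple (hD : D.skeleton = pathG (n + 2)) (a b c : Fin (n + 2))
    (hab : (a : ℕ) + 1 = (b : ℕ)) (hbc : (b : ℕ) + 1 = (c : ℕ)) :
    D.imset {a, b, c} = if D.adj a b ∧ D.adj c b then 1 else 0 := by
  have hne_ab : a ≠ b := by simp [Fin.ext_iff]; omega
  have hne_ac : a ≠ c := by simp [Fin.ext_iff]; omega
  have hne_bc : b ≠ c := by simp [Fin.ext_iff]; omega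
  have haS : a ∈ ({a, b, c} : Finset (Fin (n + 2))) := by simp
  have hbS : b ∈ ({a, b, c} : Finset (Fin (n + 2))) := by simp
  have hcS : c ∈ ({a, b, c} : Finset (Fin (n + 2))) := by simp
  have hmem : ∀ x : Fin (n + 2), x ∈ ({a, b, c} : Finset (Fin (n + 2))) ↔
      (x = a ∨ x = b ∨ x = c) := by intro x; simp
  have hcard : ({a, b, c} : Finset (Fin (n + 2))).card = 3 := by
    rw [Finset.card_insert_of_notMem (by simp [hne_ab, hne_ac]),
      Finset.card_insert_of_notMem (by simp [hne_bc]), Finset.card_singleton]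
  by_cases h : D.adj a b ∧ D.adj c b
  · rw [if_pos h, DAG.imset, if_pos]
    refine ⟨by omega, b, hbS, ?_⟩
    intro j hjS hjb
    rcases (hmem j).1 hjS with rfl | rfl | rfl
    · exact h.1
    · exact absurd rfl hjb
    · exact h.2
  · rw [if_neg h, DAG.imset, if_neg]
    rintro ⟨-, i, hiS, hpar⟩
    rcases (hmem i).1 hiS with rfl | rfl | rfl
    · have hca : D.adj c i := hpar c hcS (Ne.symm hne_ac)
      have := path_adj_cases hD c i hca
      omega
    · exact h ⟨hpar a haS hne_ab, hpar c hcS (Ne.symm hne_bc)⟩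
    · have hac : D.adj a i := hpar a haS hne_ac
      have := path_adj_cases hD a i hac
      omega

lemma path_imset_support (hD : D.skeleton = pathG (n + 2)) (S : Finset (Fin (n + 2))) (h : D.imset S ≠ 0) :
    (∃ i j : Fin (n + 2), (i : ℕ) + 1 = (j : ℕ) ∧ S = {i, j}) ∨
      (∃ t : Fin n, S = pathTriple n t) := by
  rw [DAG.imset] at h
  have hcond : 2 ≤ S.card ∧ ∃ i ∈ S, ∀ j ∈ S, j ≠ i → D.adj j i := by
    by_contra hc
    rw [if_neg hc] at h
    exact h rfl
  obtain ⟨hcard, i, hiS, hpar⟩ := hcond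
  have hclass : ∀ j ∈ S, j = i ∨ (j : ℕ) + 1 = (i : ℕ) ∨ (i : ℕ) + 1 = (j : ℕ) := by
    intro j hj
    by_cases hji : j = i
    · exact Or.inl hji
    · exact Or.inr (path_adj_cases hD j i (hpar j hj hji))
  by_cases hl : ∃ j ∈ S, (j : ℕ) + 1 = (i : ℕ) <;>
    by_cases hr : ∃ j ∈ S, (i : ℕ) + 1 = (j : ℕ)
  · -- triple
    obtain ⟨jl, hjlS, hjl⟩ := hl
    obtain ⟨jr, hjrS, hjr⟩ := hr
    right
    have htlt : (jl : ℕ) < n := by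
      have := jr.isLt
      omega
    refine ⟨⟨(jl : ℕ), htlt⟩, ?_⟩
    ext x
    rw [mem_pathTriple]
    constructor
    · intro hxS
      rcases hclass x hxS with rfl | hx | hx
      · simp; omega
      · have : x = jl := by simp [Fin.ext_iff]; omega
        subst this; simp
      · have : x = jr := by simp [Fin.ext_iff]; omega
        subst this; simp; omega
    · intro hx
      simp at hx
      rcases hx with hx | hx | hx
      · rwa [show x = jl by simp [Fin.ext_iff]; omega]
      · rwa [show x = i by simp [Fin.ext_iff]; omega]
      · rwa [show x = jr by simp [Fin.ext_iff]; omega]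
  · -- pair {jl, i}
    obtain ⟨jl, hjlS, hjl⟩ := hl
    left
    refine ⟨jl, i, hjl, ?_⟩
    ext x
    simp only [Finset.mem_insert, Finset.mem_singleton]
    constructor
    · intro hxS
      rcases hclass x hxS with rfl | hx | hx
      · right; rfl
      · left; simp [Fin.ext_iff]; omega
      · exact absurd ⟨x, hxS, hx⟩ hr
    · rintro (rfl | rfl) <;> assumption
  · -- pair {i, jr}
    obtain ⟨jr, hjrS, hjr⟩ := hr
    left
    refine ⟨i, jr, hjr, ?_⟩
    ext x
    simp only [Finset.mem_insert, Finset.mem_singleton]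
    constructor
    · intro hxS
      rcases hclass x hxS with rfl | hx | hx
      · left; rfl
      · exact absurd ⟨x, hxS, hx⟩ hl
      · right; simp [Fin.ext_iff]; omega
    · rintro (rfl | rfl) <;> assumption
  · -- singleton: contradiction with card
    exfalso
    have : S = {i} := by
      ext x
      simp only [Finset.mem_singleton]
      constructor
      · intro hxS
        rcases hclass x hxS with rfl | hx | hx
        · rfl
        · exact absurd ⟨x, hxS, hx⟩ hl
        · exact absurd ⟨x, hxS, hx⟩ hr
      · rintro rfl; assumption
    rw [this, Finset.card_singleton] at hcard
    omega

end PathLemmas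
section PathMain

/-- The orientation of the path with arrows converging on `S'`. -/
def pathOrient (n : ℕ) (S' : Finset (Fin (n + 2))) : Fin (n + 2) → Fin (n + 2) → Prop :=
  fun i j => ((i : ℕ) + 1 = (j : ℕ) ∧ j ∈ S') ∨ ((j : ℕ) + 1 = (i : ℕ) ∧ i ∉ S')

lemma pathOrient_acyclic {n : ℕ} (S' : Finset (Fin (n + 2)))
    (hS' : ∀ i j : Fin (n + 2), i ∈ S' → (i : ℕ) + 1 = (j : ℕ) → j ∉ S') :
    ∀ v, ¬ Relation.TransGen (pathOrient n S') v v := by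
  apply acyclic_of_rank _ (fun v => if v ∈ S' then 2 * (n + 2) else (n + 2) - (v : ℕ))
  rintro i j (⟨hij, hj⟩ | ⟨hji, hi⟩)
  · have hi : i ∉ S' := fun hi => hS' i j hi hij hj
    simp only [if_pos hj, if_neg hi]
    have := i.isLt
    omega
  · simp only [if_neg hi]
    split_ifs with hj
    · have := i.isLt; omega
    · have := j.isLt; have := i.isLt; omega

/-- The DAG on the path with colliders exactly at `S'`. -/
def pathDAG (n : ℕ) (S' : Finset (Fin (n + 2)))
    (hS' : ∀ i j : Fin (n + 2), i ∈ S' → (i : ℕ) + 1 = (j : ℕ) → j ∉ S') :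
    DAG (Fin (n + 2)) :=
  ⟨pathOrient n S', pathOrient_acyclic S' hS'⟩

lemma pathDAG_skeleton {n : ℕ} (S' : Finset (Fin (n + 2)))
    (hS' : ∀ i j : Fin (n + 2), i ∈ S' → (i : ℕ) + 1 = (j : ℕ) → j ∉ S') :
    (pathDAG n S' hS').skeleton = pathG (n + 2) := by
  apply SimpleGraph.ext
  ext i j
  show (pathOrient n S' i j ∨ pathOrient n S' j i) ↔ _
  rw [pathG_adj]
  unfold pathOrient
  by_cases hi : i ∈ S' <;> by_cases hj : j ∈ S' <;> tauto

end PathMain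
section PathR

/-- Reconstruction map: recovers an imset vector from its projection. -/
noncomputable def pathR (n : ℕ) (g : Fin n → ℝ) (S : Finset (Fin (n + 2))) : ℝ :=
  if h : ∃ t : Fin n, S = pathTriple n t then g h.choose
  else if (∃ i j : Fin (n + 2), (i : ℕ) + 1 = (j : ℕ) ∧ S = {i, j}) then 1 else 0

lemma path_imset_eq_pathR {n : ℕ} {D : DAG (Fin (n + 2))} (hD : D.skeleton = pathG (n + 2))
    (S : Finset (Fin (n + 2))) : D.imset S = pathR n (pathProj n D.imset) S := by
  rw [pathR]
  split_ifs with h1 h2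
  · rw [pathProj_apply, ← h1.choose_spec]
  · obtain ⟨i, j, hij, rfl⟩ := h2
    exact path_imset_pair hD i j hij
  · by_contra hne
    rcases path_imset_support hD S hne with ⟨i, j, hij, hS⟩ | ⟨t, hS⟩
    · exact h2 ⟨i, j, hij, hS⟩
    · exact h1 ⟨t, hS⟩

lemma pathR_comb {n : ℕ} (g1 g2 : Fin n → ℝ) (a b : ℝ) (hab : a + b = 1)
    (S : Finset (Fin (n + 2))) :
    pathR n (a • g1 + b • g2) S = a * pathR n g1 S + b * pathR n g2 S := by
  rw [pathR, pathR, pathR]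
  split_ifs with h1 h2
  · simp only [Pi.add_apply, Pi.smul_apply, smul_eq_mul]
  · linarith
  · ring

lemma path_mem_A {n : ℕ} (f : Finset (Fin (n + 2)) → ℝ) (hf : f ∈ CIM (pathG (n + 2))) :
    ∀ S, f S = pathR n (pathProj n f) S := by
  have hsub : CIM (pathG (n + 2)) ⊆
      {f : Finset (Fin (n + 2)) → ℝ | ∀ S, f S = pathR n (pathProj n f) S} := by
    apply convexHull_min
    · rintro f ⟨D, hD, rfl⟩
      exact fun S => path_imset_eq_pathR hD S
    · intro f hf g hg a b ha hb hab
      intro S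
      have h1 : (a • f + b • g) S = a * f S + b * g S := rfl
      rw [Set.mem_setOf_eq] at hf hg
      rw [h1, hf S, hg S, map_add, map_smul, map_smul, ← pathR_comb _ _ a b hab S]
  exact hsub hf

lemma path_injOn (n : ℕ) : Set.InjOn (pathProj n) (CIM (pathG (n + 2))) := by
  intro f hf g hg hfg
  funext S
  rw [path_mem_A f hf S, path_mem_A g hg S, hfg]

end PathR
section PathImage

lemma path_proj_imset {n : ℕ} {D : DAG (Fin (n + 2))} (hD : D.skeleton = pathG (n + 2))
    (t : Fin n) :
    pathProj n D.imset t =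
      if D.adj ⟨t, by omega⟩ ⟨(t : ℕ) + 1, by omega⟩ ∧
          D.adj ⟨(t : ℕ) + 2, by omega⟩ ⟨(t : ℕ) + 1, by omega⟩ then 1 else 0 := by
  rw [pathProj_apply]
  exact path_imset_triple hD ⟨t, by omega⟩ ⟨(t : ℕ) + 1, by omega⟩ ⟨(t : ℕ) + 2, by omega⟩
    rfl rfl

lemma path_gen_image (n : ℕ) :
    pathProj n '' {f | ∃ D : DAG (Fin (n + 2)), D.skeleton = pathG (n + 2) ∧ f = D.imset} =
      {f | ∃ S : Finset (Fin n), IsStable (pathG n) S ∧ f = indVec S} := by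
  ext g
  simp only [Set.mem_image, Set.mem_setOf_eq]
  constructor
  · rintro ⟨f, ⟨D, hD, rfl⟩, rfl⟩
    refine ⟨Finset.univ.filter (fun t : Fin n =>
      D.adj ⟨t, by omega⟩ ⟨(t : ℕ) + 1, by omega⟩ ∧
        D.adj ⟨(t : ℕ) + 2, by omega⟩ ⟨(t : ℕ) + 1, by omega⟩), ?_, ?_⟩
    · -- stability
      intro t ht t' ht' hadj
      rw [Finset.mem_filter] at ht ht'
      rcases (pathG_adj t t').1 hadj with h | h
      · -- t' = t + 1
        have e1 : (⟨(t' : ℕ), by omega⟩ : Fin (n + 2)) = ⟨(t : ℕ) + 1, by omega⟩ :=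
          Fin.ext h.symm
        have e2 : (⟨(t' : ℕ) + 1, by omega⟩ : Fin (n + 2)) = ⟨(t : ℕ) + 2, by omega⟩ :=
          Fin.ext (by simp; omega)
        have h2 := ht'.2.1
        rw [e1, e2] at h2
        exact not_adj_both D _ _ ⟨h2, ht.2.2⟩
      · -- t = t' + 1
        have e1 : (⟨(t : ℕ), by omega⟩ : Fin (n + 2)) = ⟨(t' : ℕ) + 1, by omega⟩ :=
          Fin.ext h.symm
        have e2 : (⟨(t : ℕ) + 1, by omega⟩ : Fin (n + 2)) = ⟨(t' : ℕ) + 2, by omega⟩ :=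
          Fin.ext (by simp; omega)
        have h2 := ht.2.1
        rw [e1, e2] at h2
        exact not_adj_both D _ _ ⟨h2, ht'.2.2⟩
    · -- projection equals indicator vector
      funext t
      rw [path_proj_imset hD t, indVec]
      have hiff : (D.adj ⟨t, by omega⟩ ⟨(t : ℕ) + 1, by omega⟩ ∧
          D.adj ⟨(t : ℕ) + 2, by omega⟩ ⟨(t : ℕ) + 1, by omega⟩) ↔
          t ∈ Finset.univ.filter (fun t : Fin n =>
            D.adj ⟨t, by omega⟩ ⟨(t : ℕ) + 1, by omega⟩ ∧
              D.adj ⟨(t : ℕ) + 2, by omega⟩ ⟨(t : ℕ) + 1, by omega⟩) := by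
        simp [Finset.mem_filter]
      exact ite_eq_ite_of_iff hiff
  · rintro ⟨S, hS, rfl⟩
    -- build the DAG with colliders at S
    have hS' : ∀ i j : Fin (n + 2),
        i ∈ S.image (fun t : Fin n => (⟨(t : ℕ) + 1, by omega⟩ : Fin (n + 2))) →
        (i : ℕ) + 1 = (j : ℕ) →
        j ∉ S.image (fun t : Fin n => (⟨(t : ℕ) + 1, by omega⟩ : Fin (n + 2))) := by
      intro i j hi hij hj
      rw [Finset.mem_image] at hi hj
      obtain ⟨u, hu, hui⟩ := hi
      obtain ⟨v, hv, hvj⟩ := hj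
      have h1 : (u : ℕ) + 1 = (i : ℕ) := by rw [← hui]
      have h2 : (v : ℕ) + 1 = (j : ℕ) := by rw [← hvj]
      have : (pathG n).Adj u v := (pathG_adj u v).2 (Or.inl (by omega))
      exact hS u hu v hv this
    set S' := S.image (fun t : Fin n => (⟨(t : ℕ) + 1, by omega⟩ : Fin (n + 2))) with hS'def
    refine ⟨(pathDAG n S' hS').imset, ⟨pathDAG n S' hS', pathDAG_skeleton S' hS', rfl⟩, ?_⟩
    funext t
    rw [path_proj_imset (pathDAG_skeleton S' hS') t, indVec]
    refine ite_eq_ite_of_iff ?_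
    have hmem : ∀ x : Fin n, (⟨(x : ℕ) + 1, by omega⟩ : Fin (n + 2)) ∈ S' ↔ x ∈ S := by
      intro x
      rw [hS'def, Finset.mem_image]
      constructor
      · rintro ⟨u, hu, hux⟩
        have : u = x := by
          have := congrArg Fin.val hux
          simp at this
          exact Fin.ext this
        rwa [← this]
      · intro hx
        exact ⟨x, hx, rfl⟩
    constructor
    · rintro ⟨h1, h2⟩
      -- first arrow gives membership of t+1 in S'
      rcases h1 with ⟨-, hmem'⟩ | ⟨habs, -⟩
      · exact (hmem t).1 hmem'
      · simp only [Fin.val_mk] at habs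
        omega
    · intro ht
      have hb : (⟨(t : ℕ) + 1, by omega⟩ : Fin (n + 2)) ∈ S' := (hmem t).2 ht
      have hc : (⟨(t : ℕ) + 2, by omega⟩ : Fin (n + 2)) ∉ S' :=
        hS' _ _ hb (by simp)
      constructor
      · exact Or.inl ⟨by simp, hb⟩
      · exact Or.inr ⟨by simp, hc⟩

end PathImage
lemma path_half (n : ℕ) : pathProj n '' CIM (pathG (n + 2)) = STAB (pathG n) := by
  rw [CIM, STAB, (pathProj n).image_convexHull, path_gen_image]
section CycleBasics

open Fin.CommRing

variable {n : ℕ}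

lemma cyc_val1 : ((1 : Fin (n + 4)) : ℕ) = 1 := by
  show (1 : ℕ) % (n + 4) = 1
  exact Nat.mod_eq_of_lt (by omega)
lemma cyc_val2 : ((2 : Fin (n + 4)) : ℕ) = 2 := by
  show (2 : ℕ) % (n + 4) = 2
  exact Nat.mod_eq_of_lt (by omega)
lemma cyc_val3 : ((3 : Fin (n + 4)) : ℕ) = 3 := by
  show (3 : ℕ) % (n + 4) = 3
  exact Nat.mod_eq_of_lt (by omega)

lemma cyc_one_ne_zero : (1 : Fin (n + 4)) ≠ 0 := by
  intro h
  have := congrArg Fin.val h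
  rw [cyc_val1] at this
  simp at this

lemma cyc_two_ne_zero : (2 : Fin (n + 4)) ≠ 0 := by
  intro h
  have := congrArg Fin.val h
  rw [cyc_val2] at this
  simp at this

lemma cyc_three_ne_zero : (3 : Fin (n + 4)) ≠ 0 := by
  intro h
  have := congrArg Fin.val h
  rw [cyc_val3] at this
  simp at this

lemma cyc_one_ne_two : (1 : Fin (n + 4)) ≠ 2 := by
  intro h
  have := congrArg Fin.val h
  rw [cyc_val1, cyc_val2] at this
  omega

lemma cyc_ne_add {i d : Fin (n + 4)} (hd : d ≠ 0) : i ≠ i + d := by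
  intro h
  apply hd
  have h2 : i + 0 = i + d := by rw [add_zero]; exact h
  exact (add_left_cancel h2).symm

lemma cyc_add_val (i : Fin (n + 4)) : ((i + 1 : Fin (n + 4)) : ℕ) = ((i : ℕ) + 1) % (n + 4) := by
  rw [Fin.add_def, cyc_val1]

lemma cycleG_adj (i j : Fin (n + 4)) :
    (cycleG (n + 4)).Adj i j ↔ (i + 1 = j ∨ j + 1 = i) := by
  have key : ∀ a b : Fin (n + 4), (((a : ℕ) + 1) % (n + 4) = (b : ℕ)) ↔ a + 1 = b := by
    intro a b
    rw [Fin.ext_iff, cyc_add_val]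
  constructor
  · rintro ⟨hne, h | h⟩
    · exact Or.inl ((key i j).1 h)
    · exact Or.inr ((key j i).1 h)
  · intro h
    have hne : i ≠ j := by
      rintro rfl
      rcases h with h | h <;> exact cyc_ne_add cyc_one_ne_zero h.symm
    refine ⟨hne, ?_⟩
    rcases h with h | h
    · exact Or.inl ((key i j).2 h)
    · exact Or.inr ((key j i).2 h)

variable {D : DAG (Fin (n + 4))}

lemma cyc_adj_cases (hD : D.skeleton = cycleG (n + 4)) (i j : Fin (n + 4)) (h : D.adj i j) :
    i + 1 = j ∨ j + 1 = i := by
  have h2 : D.skeleton.Adj i j := Or.inl h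
  rw [hD] at h2
  exact (cycleG_adj i j).1 h2

lemma cyc_adj_total (hD : D.skeleton = cycleG (n + 4)) (i j : Fin (n + 4)) (h : i + 1 = j) :
    D.adj i j ∨ D.adj j i := by
  have h2 : (cycleG (n + 4)).Adj i j := (cycleG_adj i j).2 (Or.inl h)
  rw [← hD] at h2
  exact h2

lemma cyc_imset_pair (hD : D.skeleton = cycleG (n + 4)) (i j : Fin (n + 4)) (hij : i + 1 = j) :
    D.imset {i, j} = 1 := by
  have hne : i ≠ j := by
    rintro rfl
    exact cyc_ne_add cyc_one_ne_zero hij.symm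
  rw [DAG.imset, if_pos]
  constructor
  · rw [Finset.card_insert_of_notMem (by simpa using hne), Finset.card_singleton]
  · rcases cyc_adj_total hD i j hij with h | h
    · exact ⟨j, by simp, fun k hk hkj => by
        rcases Finset.mem_insert.1 hk with rfl | hk
        · exact h
        · exact absurd (Finset.mem_singleton.1 hk) hkj⟩
    · exact ⟨i, by simp, fun k hk hki => by
        rcases Finset.mem_insert.1 hk with rfl | hk
        · exact absurd rfl hki
        · rw [Finset.mem_singleton.1 hk]; exact h⟩

lemma cyc_two_eq (t : Fin (n + 4)) : t + 2 = (t + 1) + 1 := by ring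

lemma cyc_imset_triple (hD : D.skeleton = cycleG (n + 4)) (t : Fin (n + 4)) :
    D.imset {t, t + 1, t + 2} = if D.adj t (t + 1) ∧ D.adj (t + 2) (t + 1) then 1 else 0 := by
  have hne_ab : t ≠ t + 1 := cyc_ne_add cyc_one_ne_zero
  have hne_ac : t ≠ t + 2 := cyc_ne_add cyc_two_ne_zero
  have hne_bc : t + 1 ≠ t + 2 := by
    rw [cyc_two_eq]
    exact cyc_ne_add cyc_one_ne_zero
  have haS : t ∈ ({t, t + 1, t + 2} : Finset (Fin (n + 4))) := by simp
  have hbS : t + 1 ∈ ({t, t + 1, t + 2} : Finset (Fin (n + 4))) := by simp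
  have hcS : t + 2 ∈ ({t, t + 1, t + 2} : Finset (Fin (n + 4))) := by simp
  have hmem : ∀ x : Fin (n + 4), x ∈ ({t, t + 1, t + 2} : Finset (Fin (n + 4))) ↔
      (x = t ∨ x = t + 1 ∨ x = t + 2) := by intro x; simp
  have hcard : ({t, t + 1, t + 2} : Finset (Fin (n + 4))).card = 3 := by
    rw [Finset.card_insert_of_notMem (by simp [hne_ab, hne_ac]),
      Finset.card_insert_of_notMem (by simp [hne_bc]), Finset.card_singleton]
  by_cases h : D.adj t (t + 1) ∧ D.adj (t + 2) (t + 1)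
  · rw [if_pos h, DAG.imset, if_pos]
    refine ⟨by omega, t + 1, hbS, ?_⟩
    intro j hjS hjb
    rcases (hmem j).1 hjS with rfl | rfl | rfl
    · exact h.1
    · exact absurd rfl hjb
    · exact h.2
  · rw [if_neg h, DAG.imset, if_neg]
    rintro ⟨-, i, hiS, hpar⟩
    rcases (hmem i).1 hiS with rfl | rfl | rfl
    · have hca : D.adj (i + 2) i := hpar (i + 2) hcS (Ne.symm hne_ac)
      rcases cyc_adj_cases hD (i + 2) i hca with h2 | h2
      · rw [show i + 2 + 1 = i + 3 by ring] at h2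
        exact cyc_ne_add cyc_three_ne_zero h2.symm
      · rw [show i + 2 = i + 1 + 1 by ring] at h2
        exact cyc_ne_add cyc_one_ne_zero h2
    · exact h ⟨hpar t haS hne_ab, hpar (t + 2) hcS (Ne.symm hne_bc)⟩
    · have hac : D.adj t (t + 2) := hpar t haS hne_ac
      rcases cyc_adj_cases hD t (t + 2) hac with h2 | h2
      · rw [show t + 2 = t + 1 + 1 by ring] at h2
        exact cyc_ne_add cyc_one_ne_zero h2
      · rw [show t + 2 + 1 = t + 3 by ring] at h2
        exact cyc_ne_add cyc_three_ne_zero h2.symm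

end CycleBasics
section CycleR

open Fin.CommRing

variable {n : ℕ} {D : DAG (Fin (n + 4))}

lemma cyc_imset_support (hD : D.skeleton = cycleG (n + 4)) (S : Finset (Fin (n + 4)))
    (h : D.imset S ≠ 0) :
    (∃ j : Fin (n + 4), S = {j, j + 1}) ∨ (∃ t : Fin (n + 4), S = {t, t + 1, t + 2}) := by
  rw [DAG.imset] at h
  have hcond : 2 ≤ S.card ∧ ∃ i ∈ S, ∀ j ∈ S, j ≠ i → D.adj j i := by
    by_contra hc
    rw [if_neg hc] at h
    exact h rfl
  obtain ⟨hcard, i, hiS, hpar⟩ := hcond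
  have hclass : ∀ j ∈ S, j = i ∨ j = i - 1 ∨ j = i + 1 := by
    intro j hj
    by_cases hji : j = i
    · exact Or.inl hji
    · rcases cyc_adj_cases hD j i (hpar j hj hji) with h2 | h2
      · right; left; rw [← h2]; ring
      · exact Or.inr (Or.inr h2.symm)
  by_cases hl : i - 1 ∈ S <;> by_cases hr : i + 1 ∈ S
  · right
    refine ⟨i - 1, ?_⟩
    have e1 : i - 1 + 1 = i := by ring
    have e2 : i - 1 + 2 = i + 1 := by ring
    ext x
    simp only [Finset.mem_insert, Finset.mem_singleton, e1, e2]
    constructor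
    · intro hxS
      rcases hclass x hxS with rfl | rfl | rfl
      · exact Or.inr (Or.inl rfl)
      · exact Or.inl rfl
      · exact Or.inr (Or.inr rfl)
    · rintro (rfl | rfl | rfl) <;> assumption
  · left
    refine ⟨i - 1, ?_⟩
    have e1 : i - 1 + 1 = i := by ring
    ext x
    simp only [Finset.mem_insert, Finset.mem_singleton, e1]
    constructor
    · intro hxS
      rcases hclass x hxS with rfl | rfl | rfl
      · exact Or.inr rfl
      · exact Or.inl rfl
      · exact absurd hxS hr
    · rintro (rfl | rfl) <;> assumption
  · left
    refine ⟨i, ?_⟩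
    ext x
    simp only [Finset.mem_insert, Finset.mem_singleton]
    constructor
    · intro hxS
      rcases hclass x hxS with rfl | rfl | rfl
      · exact Or.inl rfl
      · exact absurd hxS hl
      · exact Or.inr rfl
    · rintro (rfl | rfl) <;> assumption
  · exfalso
    have : S = {i} := by
      ext x
      simp only [Finset.mem_singleton]
      constructor
      · intro hxS
        rcases hclass x hxS with rfl | rfl | rfl
        · rfl
        · exact absurd hxS hl
        · exact absurd hxS hr
      · rintro rfl; assumption
    rw [this, Finset.card_singleton] at hcard
    omega

lemma cycleProj_apply (f : Finset (Fin (n + 4)) → ℝ) (t : Fin (n + 4)) :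
    cycleProj n f t = f {t, t + 1, t + 2} := rfl

/-- Reconstruction map for the cycle. -/
noncomputable def cycR (n : ℕ) (g : Fin (n + 4) → ℝ) (S : Finset (Fin (n + 4))) : ℝ :=
  if h : ∃ t : Fin (n + 4), S = {t, t + 1, t + 2} then g h.choose
  else if (∃ j : Fin (n + 4), S = {j, j + 1}) then 1 else 0

lemma cyc_imset_eq_cycR (hD : D.skeleton = cycleG (n + 4)) (S : Finset (Fin (n + 4))) :
    D.imset S = cycR n (cycleProj n D.imset) S := by
  rw [cycR]
  split_ifs with h1 h2
  · rw [cycleProj_apply, ← h1.choose_spec]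
  · obtain ⟨j, rfl⟩ := h2
    exact cyc_imset_pair hD j (j + 1) rfl
  · by_contra hne
    rcases cyc_imset_support hD S hne with ⟨j, hS⟩ | ⟨t, hS⟩
    · exact h2 ⟨j, hS⟩
    · exact h1 ⟨t, hS⟩

lemma cycR_comb (g1 g2 : Fin (n + 4) → ℝ) (a b : ℝ) (hab : a + b = 1)
    (S : Finset (Fin (n + 4))) :
    cycR n (a • g1 + b • g2) S = a * cycR n g1 S + b * cycR n g2 S := by
  rw [cycR, cycR, cycR]
  split_ifs with h1 h2
  · simp only [Pi.add_apply, Pi.smul_apply, smul_eq_mul]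
  · linarith
  · ring

lemma cyc_mem_A (f : Finset (Fin (n + 4)) → ℝ) (hf : f ∈ CIM (cycleG (n + 4))) :
    ∀ S, f S = cycR n (cycleProj n f) S := by
  have hsub : CIM (cycleG (n + 4)) ⊆
      {f : Finset (Fin (n + 4)) → ℝ | ∀ S, f S = cycR n (cycleProj n f) S} := by
    apply convexHull_min
    · rintro f ⟨D, hD, rfl⟩
      exact fun S => cyc_imset_eq_cycR hD S
    · intro f hf g hg a b ha hb hab S
      have h1 : (a • f + b • g) S = a * f S + b * g S := rfl
      rw [Set.mem_setOf_eq] at hf hg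
      rw [h1, hf S, hg S, map_add, map_smul, map_smul, ← cycR_comb _ _ a b hab S]
  exact hsub hf

lemma cyc_injOn (n : ℕ) : Set.InjOn (cycleProj n) (CIM (cycleG (n + 4))) := by
  intro f hf g hg hfg
  funext S
  rw [cyc_mem_A f hf S, cyc_mem_A g hg S, hfg]

end CycleR
section CycleImage

open Fin.CommRing

variable {n : ℕ}

lemma cyc_exists_collider {D : DAG (Fin (n + 4))} (hD : D.skeleton = cycleG (n + 4)) :
    ∃ t : Fin (n + 4), D.adj t (t + 1) ∧ D.adj (t + 2) (t + 1) := by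
  by_contra hno
  push_neg at hno
  have htot : ∀ v : Fin (n + 4), D.adj v (v + 1) ∨ D.adj (v + 1) v := fun v =>
    cyc_adj_total hD v (v + 1) rfl
  have hstep : ∀ v : Fin (n + 4), D.adj v (v + 1) → D.adj (v + 1) (v + 1 + 1) := by
    intro v hv
    rcases htot (v + 1) with h | h
    · exact h
    · exact absurd (by rw [cyc_two_eq]; exact h) (hno v hv)
  by_cases h0 : D.adj 0 (0 + 1)
  · exact no_step D.adj D.acyclic 1
      (fun v => step_all (fun v => D.adj v (v + 1)) hstep 0 v h0)
  · have hnone : ∀ v, ¬ D.adj v (v + 1) := fun v hv =>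
      h0 (step_all (fun v => D.adj v (v + 1)) hstep v 0 hv)
    have hall : ∀ v : Fin (n + 4), D.adj v (v + (-1)) := by
      intro v
      rcases htot (v + (-1)) with h | h
      · exact absurd h (hnone _)
      · rwa [show v + (-1) + 1 = v by ring] at h
    exact no_step D.adj D.acyclic (-1) hall

/-- The orientation of the cycle with arrows converging on `S'`. -/
def cycOrient (n : ℕ) (S' : Finset (Fin (n + 4))) : Fin (n + 4) → Fin (n + 4) → Prop :=
  fun i j => (j = i + 1 ∧ j ∈ S') ∨ (i = j + 1 ∧ i ∉ S')

lemma cycOrient_acyclic (S' : Finset (Fin (n + 4))) (s : Fin (n + 4)) (hs : s ∈ S')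
    (hS' : ∀ i ∈ S', i + 1 ∉ S') :
    ∀ v, ¬ Relation.TransGen (cycOrient n S') v v := by
  apply acyclic_of_rank _
    (fun v => if v ∈ S' then 2 * (n + 4) else (n + 4) - ((v - s : Fin (n + 4)) : ℕ))
  rintro i j (⟨hji, hj⟩ | ⟨hij, hi⟩)
  · have hi : i ∉ S' := by
      intro hi
      exact hS' i hi (hji ▸ hj)
    simp only [if_neg hi, if_pos hj]
    have := (i - s).isLt
    omega
  · simp only [if_neg hi]
    by_cases hj : j ∈ S'
    · simp only [if_pos hj]
      have := (i - s).isLt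
      omega
    · simp only [if_neg hj]
      have hne : (j - s) + 1 ≠ 0 := by
        intro h0
        apply hi
        have : i = s := by rw [hij, ← sub_eq_zero]; rw [show j + 1 - s = j - s + 1 by ring, h0]
        rwa [this]
      have e : i - s = (j - s) + 1 := by rw [hij]; ring
      rw [e, val_add_one_of_ne _ hne]
      have := (j - s).isLt
      omega

end CycleImage
section CycleMain

variable {n : ℕ}

/-- The DAG on the cycle with colliders exactly at `S'`. -/
def cycDAG (n : ℕ) (S' : Finset (Fin (n + 4))) (s : Fin (n + 4)) (hs : s ∈ S')
    (hS' : ∀ i ∈ S', i + 1 ∉ S') : DAG (Fin (n + 4)) :=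
  ⟨cycOrient n S', cycOrient_acyclic S' s hs hS'⟩

lemma cycDAG_skeleton (S' : Finset (Fin (n + 4))) (s : Fin (n + 4)) (hs : s ∈ S')
    (hS' : ∀ i ∈ S', i + 1 ∉ S') :
    (cycDAG n S' s hs hS').skeleton = cycleG (n + 4) := by
  apply SimpleGraph.ext
  ext i j
  show (cycOrient n S' i j ∨ cycOrient n S' j i) ↔ _
  rw [cycleG_adj]
  unfold cycOrient
  constructor
  · rintro ((⟨h, -⟩ | ⟨h, -⟩) | (⟨h, -⟩ | ⟨h, -⟩))
    · exact Or.inl h.symm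
    · exact Or.inr h.symm
    · exact Or.inr h.symm
    · exact Or.inl h.symm
  · intro h
    by_cases hi : i ∈ S' <;> by_cases hj : j ∈ S' <;> rcases h with h | h <;> tauto

lemma cyc_gen_image (n : ℕ) :
    cycleProj n '' {f | ∃ D : DAG (Fin (n + 4)), D.skeleton = cycleG (n + 4) ∧ f = D.imset} =
      {f | ∃ S : Finset (Fin (n + 4)), S.Nonempty ∧ IsStable (cycleG (n + 4)) S ∧
        f = indVec S} := by
  ext g
  simp only [Set.mem_image, Set.mem_setOf_eq]
  constructor
  · rintro ⟨f, ⟨D, hD, rfl⟩, rfl⟩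
    refine ⟨Finset.univ.filter (fun t : Fin (n + 4) =>
      D.adj t (t + 1) ∧ D.adj (t + 2) (t + 1)), ?_, ?_, ?_⟩
    · obtain ⟨t, ht⟩ := cyc_exists_collider hD
      exact ⟨t, Finset.mem_filter.2 ⟨Finset.mem_univ _, ht⟩⟩
    · intro t ht t' ht' hadj
      rw [Finset.mem_filter] at ht ht'
      rcases (cycleG_adj t t').1 hadj with h | h
      · -- t' = t + 1
        have h2 := ht'.2.1
        rw [← h] at h2
        have h3 := ht.2.2
        rw [cyc_two_eq] at h3
        exact not_adj_both D _ _ ⟨h2, h3⟩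
      · -- t = t' + 1
        have h2 := ht.2.1
        rw [← h] at h2
        have h3 := ht'.2.2
        rw [cyc_two_eq] at h3
        exact not_adj_both D _ _ ⟨h2, h3⟩
    · funext t
      rw [cycleProj_apply, cyc_imset_triple hD t, indVec]
      refine ite_eq_ite_of_iff ?_
      simp [Finset.mem_filter]
  · rintro ⟨S, hSne, hS, rfl⟩
    have hinj : ∀ u v : Fin (n + 4), u + 1 = v + 1 → u = v := by
      intro u v h
      exact add_right_cancel h
    have hmemS' : ∀ x : Fin (n + 4), x ∈ S.image (· + 1) ↔ ∃ u ∈ S, u + 1 = x := by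
      intro x
      exact Finset.mem_image
    have hS' : ∀ i ∈ S.image (· + 1), i + 1 ∉ S.image (· + 1) := by
      intro i hi hi1
      obtain ⟨u, hu, hui⟩ := (hmemS' i).1 hi
      obtain ⟨v, hv, hvi⟩ := (hmemS' (i + 1)).1 hi1
      have : v = u + 1 := by
        apply hinj
        rw [hvi, hui]
      have hadj : (cycleG (n + 4)).Adj u v := (cycleG_adj u v).2 (Or.inl this.symm)
      exact hS u hu v hv hadj
    obtain ⟨s0, hs0⟩ := hSne
    have hs : s0 + 1 ∈ S.image (· + 1) := (hmemS' (s0 + 1)).2 ⟨s0, hs0, rfl⟩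
    set S' := S.image (· + 1) with hS'def
    set D := cycDAG n S' (s0 + 1) hs hS' with hDdef
    have hDskel : D.skeleton = cycleG (n + 4) := cycDAG_skeleton S' (s0 + 1) hs hS'
    refine ⟨D.imset, ⟨D, hDskel, rfl⟩, ?_⟩
    funext t
    rw [cycleProj_apply, cyc_imset_triple hDskel t, indVec]
    refine ite_eq_ite_of_iff ?_
    have hb : t + 1 ∈ S' ↔ t ∈ S := by
      rw [hmemS']
      constructor
      · rintro ⟨u, hu, hu1⟩
        rwa [← hinj u t hu1]
      · intro ht
        exact ⟨t, ht, rfl⟩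
    constructor
    · rintro ⟨h1, -⟩
      rcases h1 with ⟨-, hmem'⟩ | ⟨habs, -⟩
      · exact hb.1 hmem'
      · exact absurd (by rw [cyc_two_eq]; exact habs) (cyc_ne_add cyc_two_ne_zero)
    · intro ht
      have hbS : t + 1 ∈ S' := hb.2 ht
      have hcS : t + 2 ∉ S' := by
        rw [cyc_two_eq]
        exact hS' (t + 1) hbS
      constructor
      · exact Or.inl ⟨rfl, hbS⟩
      · exact Or.inr ⟨cyc_two_eq t, hcS⟩

lemma cyc_half (n : ℕ) :
    cycleProj n '' CIM (cycleG (n + 4)) =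
      convexHull ℝ { f | ∃ S : Finset (Fin (n + 4)),
        S.Nonempty ∧ IsStable (cycleG (n + 4)) S ∧ f = indVec S } := by
  rw [CIM, (cycleProj n).image_convexHull, cyc_gen_image]

end CycleMain
/-- **`CIM` of paths and cycles vs. stable set polytopes.**  The coordinate projection
carries `CIM_{I_p}` (`p = n+2 ≥ 2`) affinely bijectively onto `STAB(I_{p-2})`, and carries
`CIM_{C_p}` (`p = n+4 ≥ 4`) affinely bijectively onto the convex hull of the incidence
vectors of the non-empty stable sets of `C_p`. -/
theorem cim_path_cycle_eq_stab (n : ℕ) :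
    ((pathProj n) '' CIM (pathG (n + 2)) = STAB (pathG n) ∧
      Set.InjOn (pathProj n) (CIM (pathG (n + 2)))) ∧
    ((cycleProj n) '' CIM (cycleG (n + 4)) =
        convexHull ℝ { f | ∃ S : Finset (Fin (n + 4)),
          S.Nonempty ∧ IsStable (cycleG (n + 4)) S ∧ f = indVec S } ∧
      Set.InjOn (cycleProj n) (CIM (cycleG (n + 4)))) := by
  exact ⟨⟨path_half n, path_injOn n⟩, cyc_half n, cyc_injOn n⟩
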